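/- Let H be a symmetric positive definite n×n real matrix, X an n×p real matrix of rank p, and L₁ (n×p) and L₂ (n×(n−p)) real matrices such that [L₁ L₂] is nonsingular, L₁ᵀX = I_p, and L₂ᵀX = 0. Then H⁻¹ − H⁻¹X(XᵀH⁻¹X)⁻¹XᵀH⁻¹ = L₂(L₂ᵀHL₂)⁻¹L₂ᵀ. -/

import Mathlib

open Matrix Module

lemma aux_posdef {m k : Type*} [Fintype m] [Fintype k] {A : Matrix m m ℝ} (hA : A.PosDef)
    (B : Matrix m k ℝ) (hB : Function.Injective B.mulVec) : (Bᵀ * A * B).PosDef := by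
  apply Matrix.PosDef.of_dotProduct_mulVec_pos
  · have h := Matrix.isHermitian_conjTranspose_mul_mul B hA.1
    simpa using h
  · intro x hx
    have hBx : B *ᵥ x ≠ 0 := fun h => hx (hB (h.trans (B.mulVec_zero).symm))
    have h := hA.dotProduct_mulVec_pos hBx
    simpa only [star_trivial, ← Matrix.mulVec_mulVec, Matrix.dotProduct_mulVec,
      Matrix.vecMul_transpose] using h

theorem stmt_15 {n p : ℕ} (H : Matrix (Fin n) (Fin n) ℝ)
    (X : Matrix (Fin n) (Fin p) ℝ)
    (L₁ : Matrix (Fin n) (Fin p) ℝ) (L₂ : Matrix (Fin n) (Fin (n - p)) ℝ)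
    (hH : H.PosDef) (hX : X.rank = p)
    (hL : ∃ M : Matrix (Fin p ⊕ Fin (n - p)) (Fin n) ℝ,
      Matrix.fromCols L₁ L₂ * M = 1 ∧ M * Matrix.fromCols L₁ L₂ = 1)
    (hL₁X : L₁ᵀ * X = 1) (hL₂X : L₂ᵀ * X = 0) :
    H⁻¹ - H⁻¹ * X * (Xᵀ * H⁻¹ * X)⁻¹ * Xᵀ * H⁻¹ = L₂ * (L₂ᵀ * H * L₂)⁻¹ * L₂ᵀ := by
  -- basic facts
  have hpn : p ≤ n := by
    have := X.rank_le_card_height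
    simpa [hX] using this
  have hXinj : Function.Injective X.mulVec := by
    have h2 := LinearMap.finrank_range_add_finrank_ker X.mulVecLin
    rw [show finrank ℝ (LinearMap.range X.mulVecLin) = p from hX,
      show finrank ℝ (Fin p → ℝ) = p by simp] at h2
    have hker : LinearMap.ker X.mulVecLin = ⊥ := by
      rw [← Submodule.finrank_eq_zero (R := ℝ)]; omega
    simpa [Matrix.coe_mulVecLin] using LinearMap.ker_eq_bot.mp hker
  obtain ⟨M, hM1, hM2⟩ := hL
  have hL2inj : Function.Injective L₂.mulVec := by
    intro u v huv
    have h1 : M *ᵥ (fromCols L₁ L₂ *ᵥ Sum.elim 0 u)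
        = M *ᵥ (fromCols L₁ L₂ *ᵥ Sum.elim 0 v) := by
      simp [huv]
    simp only [Matrix.mulVec_mulVec, hM2, Matrix.one_mulVec] at h1
    exact funext fun i => congrFun h1 (Sum.inr i)
  have hHd : IsUnit H.det := isUnit_iff_ne_zero.mpr (ne_of_gt hH.det_pos)
  have hP1 : (Xᵀ * H⁻¹ * X).PosDef := aux_posdef hH.inv X hXinj
  have hP2 : (L₂ᵀ * H * L₂).PosDef := aux_posdef hH L₂ hL2inj
  have hd1 : IsUnit (Xᵀ * H⁻¹ * X).det := isUnit_iff_ne_zero.mpr (ne_of_gt hP1.det_pos)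
  have hd2 : IsUnit (L₂ᵀ * H * L₂).det := isUnit_iff_ne_zero.mpr (ne_of_gt hP2.det_pos)
  have hHiH : H⁻¹ * H = 1 := Matrix.nonsing_inv_mul H hHd
  have hXL2 : Xᵀ * L₂ = 0 := by
    have := congrArg Matrix.transpose hL₂X
    simpa using this
  -- the four blocks
  set R₁ : Matrix (Fin p) (Fin n) ℝ := (Xᵀ * H⁻¹ * X)⁻¹ * (Xᵀ * H⁻¹) with hR₁
  set R₂ : Matrix (Fin (n - p)) (Fin n) ℝ := (L₂ᵀ * H * L₂)⁻¹ * L₂ᵀ with hR₂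
  have b11 : R₁ * X = 1 := by
    rw [hR₁, Matrix.mul_assoc]; exact Matrix.nonsing_inv_mul _ hd1
  have b12 : R₁ * (H * L₂) = 0 := by
    rw [hR₁, Matrix.mul_assoc, show (Xᵀ * H⁻¹) * (H * L₂) = Xᵀ * L₂ by
      rw [Matrix.mul_assoc, ← Matrix.mul_assoc H⁻¹, hHiH, Matrix.one_mul], hXL2, Matrix.mul_zero]
  have b21 : R₂ * X = 0 := by
    rw [hR₂, Matrix.mul_assoc, hL₂X, Matrix.mul_zero]
  have b22 : R₂ * (H * L₂) = 1 := by
    rw [hR₂, Matrix.mul_assoc, ← Matrix.mul_assoc L₂ᵀ]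
    exact Matrix.nonsing_inv_mul _ hd2
  have key : fromRows R₁ R₂ * fromCols X (H * L₂) = 1 := by
    rw [fromRows_mul_fromCols, b11, b12, b21, b22, ← Matrix.fromBlocks_one]
  have e : Fin n ≃ Fin p ⊕ Fin (n - p) :=
    (finCongr (Nat.add_sub_cancel' hpn).symm).trans finSumFinEquiv.symm
  have key2 : fromCols X (H * L₂) * fromRows R₁ R₂ = 1 :=
    (fromCols_mul_fromRows_eq_one_comm e X (H * L₂) R₁ R₂).mpr key
  rw [fromCols_mul_fromRows] at key2
  -- multiply by H⁻¹ on the left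
  have key3 := congrArg (fun Z => H⁻¹ * Z) key2
  simp only [Matrix.mul_add, Matrix.mul_one, ← Matrix.mul_assoc, hHiH, Matrix.one_mul] at key3
  rw [show H⁻¹ * X * (Xᵀ * H⁻¹ * X)⁻¹ * Xᵀ * H⁻¹ = H⁻¹ * X * R₁ from by
      rw [hR₁]; simp only [Matrix.mul_assoc],
    show L₂ * (L₂ᵀ * H * L₂)⁻¹ * L₂ᵀ = L₂ * R₂ from by rw [hR₂, Matrix.mul_assoc],
    sub_eq_iff_eq_add']
  exact key3.symm
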